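/- Let A be a C*-algebra, X a (right) Hilbert A-module and φ : A → B(X) a left action. If φ(J_X) = K(X), where J_X = φ⁻¹(K(X)) ∩ (ker φ)^⊥, then X is a Hilbert A-bimodule with left inner product given by ⟨⟨ξ,η⟩⟩ = (φ|_{J_X})⁻¹(θ_{ξ,η}) ∈ J_X; that is, the map ⟨⟨·,·⟩⟩ : X × X → A so defined is linear in the first variable and satisfies ⟨⟨φ(a)ξ, η⟩⟩ = a⟨⟨ξ,η⟩⟩, ⟨⟨ξ,η⟩⟩ = ⟨⟨η,ξ⟩⟩*, ⟨⟨ξ,ξ⟩⟩ ≥ 0, and φ(⟨⟨ξ,η⟩⟩)ζ = ξ·⟨η,ζ⟩_X for all ξ,η,ζ ∈ X and a ∈ A. -/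

import Mathlib

open scoped RightActions

/-- The December 2024 Mathlib `CStarModule` (right Hilbert module, right action through `Aᵐᵒᵖ`),
reproduced verbatim since Mathlib's `CStarModule` is now a left-module notion. -/
class CStarModuleOld (A E : outParam Type*) [NonUnitalSemiring A] [StarRing A] [Module ℂ A]
    [AddCommGroup E] [Module ℂ E] [PartialOrder A] [SMul Aᵐᵒᵖ E] [Norm A] [Norm E]
    extends Inner A E where
  inner_add_right {x} {y} {z} : inner x (y + z) = inner x y + inner x z
  inner_self_nonneg {x} : 0 ≤ inner x x
  inner_self {x} : inner x x = 0 ↔ x = 0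
  inner_op_smul_right {a : A} {x y : E} : inner x (y <• a) = inner x y * a
  inner_smul_right_complex {z : ℂ} {x} {y} : inner x (z • y) = z • inner x y
  star_inner x y : star (inner x y) = inner y x
  norm_eq_sqrt_norm_inner_self x : ‖x‖ = Real.sqrt ‖inner x x‖

variable {A X : Type*} [NonUnitalCStarAlgebra A] [PartialOrder A] [StarOrderedRing A]
  [NormedAddCommGroup X] [NormedSpace ℂ X] [SMul Aᵐᵒᵖ X] [CStarModuleOld A X] [CompleteSpace X]

/-- `K(X)`: the closed linear span in `B(X)` of the rank-one operators
`θ_{ξ,η} : ζ ↦ ξ • ⟪η, ζ⟫`. -/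
def compactOps (A X : Type*) [NonUnitalCStarAlgebra A] [PartialOrder A] [StarOrderedRing A]
    [NormedAddCommGroup X] [NormedSpace ℂ X] [SMul Aᵐᵒᵖ X] [CStarModuleOld A X]
    [CompleteSpace X] : Set (X →L[ℂ] X) :=
  closure (Submodule.span ℂ
    {T : X →L[ℂ] X | ∃ ξ η : X, ∀ ζ : X, T ζ = ξ <• (inner A η ζ : A)} : Set (X →L[ℂ] X))

/-- The ideal `J_X = φ⁻¹(K(X)) ∩ (ker φ)^⊥` of Katsura, as a subset of `A`. -/
def KatsuraIdeal (φ : A →ₙₐ[ℂ] (X →L[ℂ] X)) : Set A :=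
  {a : A | φ a ∈ compactOps A X} ∩ {a : A | ∀ b : A, φ b = 0 → a * b = 0}

namespace CStarModuleOld

attribute [simp] CStarModuleOld.inner_add_right CStarModuleOld.star_inner
  CStarModuleOld.inner_op_smul_right CStarModuleOld.inner_smul_right_complex

@[simp]
lemma inner_sub_right {x y z : X} : inner A x (y - z) = inner A x y - inner A x z := by
  have h : inner A x (y - z) + inner A x z = inner A x y := by
    rw [← inner_add_right, sub_add_cancel]
  exact eq_sub_of_add_eq h

@[simp]
lemma inner_zero_right {x : X} : inner A x (0 : X) = 0 := by
  have h := inner_sub_right (A := A) (x := x) (y := x) (z := x)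
  rwa [sub_self, sub_self] at h

@[simp]
lemma inner_zero_left {x : X} : inner A (0 : X) x = 0 := by
  rw [← star_inner, inner_zero_right, star_zero]

@[simp]
lemma inner_neg_right {x y : X} : inner A x (-y) = -inner A x y := by
  rw [← zero_sub, inner_sub_right, inner_zero_right, zero_sub]

@[simp]
lemma inner_op_smul_left {a : A} {x y : X} : inner A (x <• a) y = star a * inner A x y := by
  rw [← star_inner y (x <• a), inner_op_smul_right, star_mul, star_inner]

@[simp]
lemma inner_sub_left {x y z : X} : inner A (x - y) z = inner A x z - inner A y z := by
  rw [← star_inner z, inner_sub_right, star_sub, star_inner, star_inner]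

lemma norm_sq_eq {x : X} : ‖x‖ ^ 2 = ‖inner A x x‖ := by
  rw [norm_eq_sqrt_norm_inner_self (A := A) x, Real.sq_sqrt (norm_nonneg _)]

lemma inner_smul_right_real {r : ℝ} {x y : X} : inner A x (r • y) = r • inner A x y := by
  have h₁ : r • y = (r : ℂ) • y := by simp
  have h₂ : r • inner A x y = (r : ℂ) • inner A x y := by simp
  rw [h₁, h₂, inner_smul_right_complex]

lemma inner_smul_left_real {r : ℝ} {x y : X} : inner A (r • x) y = r • inner A x y := by
  rw [← star_inner y, inner_smul_right_real, star_smul, star_trivial, star_inner]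

lemma inner_mul_inner_swap_le' {x y : X} (hx : x ≠ 0) :
    inner A y x * inner A x y ≤ ‖x‖ ^ 2 • inner A y y := by
  set a := inner A x y with ha
  have hya : inner A y x = star a := (star_inner x y).symm
  have h₁ : (0 : A) ≤ inner A (x <• a - ‖x‖ ^ 2 • y) (x <• a - ‖x‖ ^ 2 • y) := inner_self_nonneg
  have hexp : inner A (x <• a - ‖x‖ ^ 2 • y) (x <• a - ‖x‖ ^ 2 • y) =
      star a * inner A x x * a - ‖x‖ ^ 2 • (star a * a) - ‖x‖ ^ 2 • (star a * a)
        + ‖x‖ ^ 2 • (‖x‖ ^ 2 • inner A y y) := by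
    simp only [inner_sub_left, inner_sub_right, inner_op_smul_left, inner_op_smul_right,
      inner_smul_left_real, inner_smul_right_real, hya, ← ha, sub_mul, mul_sub, smul_sub,
      mul_smul_comm, smul_mul_assoc,
      mul_assoc]
    abel
  have hP : star a * inner A x x * a ≤ ‖x‖ ^ 2 • (star a * a) := by
    rw [norm_sq_eq (A := A)]
    exact CStarAlgebra.star_left_conjugate_le_norm_smul (hb := star_inner x x)
  have h2 : (0 : A) ≤ ‖x‖ ^ 2 • (‖x‖ ^ 2 • inner A y y) - ‖x‖ ^ 2 • (star a * a) := by
    calc (0 : A) ≤ _ := h₁.trans_eq hexp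
      _ ≤ ‖x‖ ^ 2 • (star a * a) - ‖x‖ ^ 2 • (star a * a) - ‖x‖ ^ 2 • (star a * a)
          + ‖x‖ ^ 2 • (‖x‖ ^ 2 • inner A y y) := by gcongr
      _ = _ := by abel
  have h3 := sub_nonneg.mp h2
  rw [hya]
  exact (smul_le_smul_iff_of_pos_left (pow_pos (norm_pos_iff.mpr hx) 2)).mp h3

variable (X) in
lemma norm_inner_le {x y : X} : ‖inner A x y‖ ≤ ‖x‖ * ‖y‖ := by
  rcases eq_or_ne x 0 with h | h
  · subst h
    rw [inner_zero_left, norm_zero, norm_zero, zero_mul]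
  have key := inner_mul_inner_swap_le' (A := A) (y := y) h
  have : ‖inner A x y‖ ^ 2 ≤ (‖x‖ * ‖y‖) ^ 2 := by
    calc ‖inner A x y‖ ^ 2 = ‖inner A y x * inner A x y‖ := by
          rw [← star_inner x y, CStarRing.norm_star_mul_self, pow_two]
      _ ≤ ‖‖x‖ ^ 2 • inner A y y‖ := CStarAlgebra.norm_le_norm_of_nonneg_of_le
          (by rw [← star_inner x y]; exact star_mul_self_nonneg _) key
      _ = ‖x‖ ^ 2 * ‖inner A y y‖ := by
          rw [norm_smul, Real.norm_of_nonneg (by positivity)]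
      _ = (‖x‖ * ‖y‖) ^ 2 := by rw [← norm_sq_eq, mul_pow]
  exact (pow_le_pow_iff_left₀ (norm_nonneg _) (by positivity) (by norm_num)).mp this

end CStarModuleOld

namespace KatsuraAux

/-- Vectors are separated by inner A products. -/
lemma ext_inner {x y : X} (h : ∀ z : X, (inner A z x : A) = inner A z y) : x = y := by
  have h0 : (inner A (x - y) (x - y) : A) = 0 := by
    rw [CStarModuleOld.inner_sub_right, h (x - y), sub_self]
  exact sub_eq_zero.mp (CStarModuleOld.inner_self.mp h0)

lemma op_smul_add_left (ξ₁ ξ₂ : X) (b : A) : (ξ₁ + ξ₂) <• b = ξ₁ <• b + ξ₂ <• b :=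
  ext_inner (A := A) fun z => by
    simp [CStarModuleOld.inner_op_smul_right, CStarModuleOld.inner_add_right, add_mul]

lemma op_smul_csmul_left (c : ℂ) (ξ : X) (b : A) : (c • ξ) <• b = c • (ξ <• b) :=
  ext_inner (A := A) fun z => by
    simp [CStarModuleOld.inner_op_smul_right, mul_smul_comm, smul_mul_assoc]

lemma op_smul_add_right (ξ : X) (b c : A) : ξ <• (b + c) = ξ <• b + ξ <• c :=
  ext_inner (A := A) fun z => by
    simp only [CStarModuleOld.inner_op_smul_right, CStarModuleOld.inner_add_right, mul_add]

lemma op_smul_csmul_right (c : ℂ) (ξ : X) (b : A) : ξ <• (c • b) = c • (ξ <• b) :=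
  ext_inner (A := A) fun z => by
    simp only [CStarModuleOld.inner_op_smul_right, CStarModuleOld.inner_smul_right_complex,
      mul_smul_comm]

lemma norm_op_smul_le (ξ : X) (b : A) : ‖ξ <• b‖ ≤ ‖ξ‖ * ‖b‖ := by
  have h2 : ‖ξ <• b‖ ^ 2 = ‖(inner A (ξ <• b) (ξ <• b) : A)‖ := CStarModuleOld.norm_sq_eq
  have h3 : (inner A (ξ <• b) (ξ <• b) : A) = star b * inner A ξ (ξ <• b) := by
    rw [CStarModuleOld.inner_op_smul_left]
  have h4 : ‖(inner A (ξ <• b) (ξ <• b) : A)‖ ≤ ‖b‖ * (‖ξ‖ * ‖ξ <• b‖) := by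
    rw [h3]
    calc ‖star b * (inner A ξ (ξ <• b) : A)‖ ≤ ‖star b‖ * ‖(inner A ξ (ξ <• b) : A)‖ :=
          norm_mul_le _ _
      _ ≤ ‖b‖ * (‖ξ‖ * ‖ξ <• b‖) := by
          rw [norm_star]
          exact mul_le_mul_of_nonneg_left (CStarModuleOld.norm_inner_le X) (norm_nonneg b)
  have h5 : ‖ξ <• b‖ * ‖ξ <• b‖ ≤ (‖ξ‖ * ‖b‖) * ‖ξ <• b‖ := by
    nlinarith [h2, h4, norm_nonneg (ξ <• b)]
  rcases eq_or_lt_of_le (norm_nonneg (ξ <• b)) with h | h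
  · rw [← h]; positivity
  · exact le_of_mul_le_mul_right h5 h

variable (A) in
/-- The rank-one operator `θ_{ξ,η}`. -/
noncomputable def theta (ξ η : X) : X →L[ℂ] X :=
  LinearMap.mkContinuous
    { toFun := fun ζ => ξ <• (inner A η ζ : A)
      map_add' := fun y z => by
        show ξ <• (inner A η (y + z) : A) = ξ <• (inner A η y : A) + ξ <• (inner A η z : A)
        rw [CStarModuleOld.inner_add_right, op_smul_add_right]
      map_smul' := fun c y => by
        show ξ <• (inner A η (c • y) : A) = c • (ξ <• (inner A η y : A))
        rw [CStarModuleOld.inner_smul_right_complex, op_smul_csmul_right] }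
    (‖ξ‖ * ‖η‖)
    (fun ζ => by
      calc ‖ξ <• (inner A η ζ : A)‖ ≤ ‖ξ‖ * ‖(inner A η ζ : A)‖ := norm_op_smul_le _ _
        _ ≤ ‖ξ‖ * (‖η‖ * ‖ζ‖) :=
            mul_le_mul_of_nonneg_left (CStarModuleOld.norm_inner_le X) (norm_nonneg ξ)
        _ = ‖ξ‖ * ‖η‖ * ‖ζ‖ := by ring)

@[simp]
lemma theta_apply (ξ η ζ : X) : theta A ξ η ζ = ξ <• (inner A η ζ : A) := rfl

lemma theta_mem_compactOps (ξ η : X) : theta A ξ η ∈ compactOps A X :=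
  subset_closure (Submodule.subset_span ⟨ξ, η, fun _ => rfl⟩)

lemma compactOps_add {S T : X →L[ℂ] X} (hS : S ∈ compactOps A X) (hT : T ∈ compactOps A X) :
    S + T ∈ compactOps A X :=
  (Submodule.span ℂ
    {T : X →L[ℂ] X | ∃ ξ η : X, ∀ ζ : X, T ζ = ξ <• (inner A η ζ : A)}).topologicalClosure.add_mem
      hS hT

lemma compactOps_smul (c : ℂ) {T : X →L[ℂ] X} (hT : T ∈ compactOps A X) :
    c • T ∈ compactOps A X :=
  (Submodule.span ℂ
    {T : X →L[ℂ] X | ∃ ξ η : X, ∀ ζ : X, T ζ = ξ <• (inner A η ζ : A)}).topologicalClosure.smul_mem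
      c hT

end KatsuraAux

open KatsuraAux in
/-- Let `φ` be a left action of `A` on a Hilbert `A`-module `X` with `φ(J_X) = K(X)`.
Then `X` becomes a Hilbert `A`-bimodule with left inner A product
`⟨⟨ξ, η⟩⟩ = (φ|_{J_X})⁻¹(θ_{ξ,η}) ∈ J_X`: there is a map `L : X × X → A` taking values in
`J_X` with `φ(L(ξ,η)) = θ_{ξ,η}`, linear in the first variable, and satisfying
`⟨⟨φ(a)ξ, η⟩⟩ = a⟨⟨ξ, η⟩⟩`, `⟨⟨ξ, η⟩⟩ = ⟨⟨η, ξ⟩⟩*`, `⟨⟨ξ, ξ⟩⟩ ≥ 0` and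
`φ(⟨⟨ξ, η⟩⟩)ζ = ξ·⟪η, ζ⟫_X`. -/
theorem bimodule_of_phi_JX_eq_compacts (φ : A →ₙₐ[ℂ] (X →L[ℂ] X))
    (hmod : ∀ (a : A) (ξ : X) (b : A), φ a (ξ <• b) = (φ a ξ) <• b)
    (hadj : ∀ (a : A) (ξ η : X), (inner A (φ a ξ) η : A) = inner A ξ (φ (star a) η))
    (hsurj : (fun a : A => φ a) '' KatsuraIdeal φ = compactOps A X) :
    ∃ L : X → X → A,
      (∀ ξ η : X, L ξ η ∈ KatsuraIdeal φ) ∧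
      (∀ ξ η ζ : X, φ (L ξ η) ζ = ξ <• (inner A η ζ : A)) ∧
      (∀ ξ₁ ξ₂ η : X, L (ξ₁ + ξ₂) η = L ξ₁ η + L ξ₂ η) ∧
      (∀ (c : ℂ) (ξ η : X), L (c • ξ) η = c • L ξ η) ∧
      (∀ (a : A) (ξ η : X), L (φ a ξ) η = a * L ξ η) ∧
      (∀ ξ η : X, L ξ η = star (L η ξ)) ∧
      (∀ ξ : X, 0 ≤ L ξ ξ) := by
  classical
  -- kernel of φ is star-closed
  have hker_star : ∀ k : A, φ k = 0 → φ (star k) = 0 := by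
    intro k hk
    ext η
    rw [ContinuousLinearMap.zero_apply]
    have h0 : (inner A (φ (star k) η) (φ (star k) η) : A) = 0 := by
      rw [← hadj k (φ (star k) η) η, hk, ContinuousLinearMap.zero_apply,
        CStarModuleOld.inner_zero_left]
    exact CStarModuleOld.inner_self.mp h0
  -- injectivity of φ on elements of (ker φ)^⊥
  have hinj : ∀ a b : A, (∀ k : A, φ k = 0 → a * k = 0) → (∀ k : A, φ k = 0 → b * k = 0) →
      φ a = φ b → a = b := by
    intro a b ha hb hab
    have hd : φ (a - b) = 0 := by rw [map_sub, hab, sub_self]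
    have hds : φ (star (a - b)) = 0 := hker_star _ hd
    have h1 : (a - b) * star (a - b) = 0 := by
      rw [sub_mul, ha _ hds, hb _ hds, sub_self]
    have h2 : ‖a - b‖ * ‖a - b‖ = 0 := by
      rw [← CStarRing.norm_self_mul_star, h1, norm_zero]
    exact sub_eq_zero.mp (norm_eq_zero.mp (mul_self_eq_zero.mp h2))
  -- choice of preimages of the rank-one operators
  have hθ : ∀ ξ η : X, ∃ a : A, a ∈ KatsuraIdeal φ ∧ φ a = theta A ξ η := by
    intro ξ η
    have : theta A ξ η ∈ (fun a : A => (φ a : X →L[ℂ] X)) '' KatsuraIdeal φ := by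
      rw [hsurj]; exact theta_mem_compactOps ξ η
    obtain ⟨a, ha, hfa⟩ := this
    exact ⟨a, ha, hfa⟩
  choose L hLmem hLeq using hθ
  have hL2 : ∀ ξ η ζ : X, φ (L ξ η) ζ = ξ <• (inner A η ζ : A) := by
    intro ξ η ζ; rw [hLeq ξ η]; rfl
  have hLperp : ∀ ξ η : X, ∀ k : A, φ k = 0 → L ξ η * k = 0 := fun ξ η => (hLmem ξ η).2
  -- additivity in the first variable
  have hadd : ∀ ξ₁ ξ₂ η : X, L (ξ₁ + ξ₂) η = L ξ₁ η + L ξ₂ η := by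
    intro ξ₁ ξ₂ η
    refine hinj _ _ (hLperp _ _) (fun k hk => ?_) ?_
    · rw [add_mul, hLperp ξ₁ η k hk, hLperp ξ₂ η k hk, add_zero]
    · ext ζ
      rw [map_add, ContinuousLinearMap.add_apply, hL2, hL2, hL2, op_smul_add_left]
  -- ℂ-homogeneity in the first variable
  have hsmul : ∀ (c : ℂ) (ξ η : X), L (c • ξ) η = c • L ξ η := by
    intro c ξ η
    refine hinj _ _ (hLperp _ _) (fun k hk => ?_) ?_
    · rw [smul_mul_assoc, hLperp ξ η k hk, smul_zero]
    · ext ζ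
      rw [map_smul, ContinuousLinearMap.smul_apply, hL2, hL2, op_smul_csmul_left]
  -- compatibility with the left action
  have hmul : ∀ (a : A) (ξ η : X), L (φ a ξ) η = a * L ξ η := by
    intro a ξ η
    refine hinj _ _ (hLperp _ _) (fun k hk => ?_) ?_
    · rw [mul_assoc, hLperp ξ η k hk, mul_zero]
    · ext ζ
      rw [map_mul, ContinuousLinearMap.mul_apply, hL2, hL2]
      exact (hmod a ξ _).symm
  -- the star identity
  have hstar : ∀ ξ η : X, L ξ η = star (L η ξ) := by
    intro ξ η
    set p := L ξ η with hp
    set q := L η ξ with hq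
    -- φ (star q) = φ p
    have hsq : φ (star q) = φ p := by
      ext ζ
      refine ext_inner (A := A) fun z => ?_
      rw [← hadj q z ζ, hL2, hL2, CStarModuleOld.inner_op_smul_left,
        CStarModuleOld.inner_op_smul_right, CStarModuleOld.star_inner]
    set d := p - star q with hdd
    have hd : φ d = 0 := by rw [map_sub, hsq, sub_self]
    have hds : φ (star d) = 0 := hker_star _ hd
    have h1 : p * star d = 0 := hLperp ξ η _ hds
    have h2 : q * d = 0 := hLperp η ξ _ hd
    -- q * p = q * star q
    have hqp : q * p = q * star q := by
      have h' : q * p - q * star q = 0 := by rw [← mul_sub]; exact h2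
      exact sub_eq_zero.mp h'
    have hspq : star p * star q = q * star q := by
      calc star p * star q = star (q * p) := by rw [star_mul]
        _ = star (q * star q) := by rw [hqp]
        _ = q * star q := by rw [star_mul, star_star]
    have hsdd : star d * d = star p * p - q * star q := by
      have expand : star d * d =
          star p * p - star p * star q - q * p + q * star q := by
        simp only [hdd, star_sub, star_star, sub_mul, mul_sub]
        abel
      rw [expand, hspq, hqp]
      abel
    have hYY : (d * star d) * (d * star d) = -((d * q) * star (d * q)) := by
      calc (d * star d) * (d * star d) = d * (star d * d) * star d := by noncomm_ring
        _ = d * (star p * p - q * star q) * star d := by rw [hsdd]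
        _ = (d * star p) * (p * star d) - (d * q) * (star q * star d) := by noncomm_ring
        _ = -((d * q) * star (d * q)) := by
            rw [h1, mul_zero, zero_sub, star_mul d q]
    have hYpos : 0 ≤ (d * star d) * (d * star d) := by
      have hsY : star (d * star d) = d * star d := by rw [star_mul, star_star]
      calc (0 : A) ≤ star (d * star d) * (d * star d) := star_mul_self_nonneg _
        _ = (d * star d) * (d * star d) := by rw [hsY]
    have hYneg : (d * star d) * (d * star d) ≤ 0 := by
      rw [hYY]
      exact neg_nonpos.mpr (mul_star_self_nonneg _)
    have hY2 : (d * star d) * (d * star d) = 0 := le_antisymm hYneg hYpos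
    have hY : d * star d = 0 := by
      have hsY : star (d * star d) = d * star d := by rw [star_mul, star_star]
      have hnrm : ‖d * star d‖ * ‖d * star d‖ = 0 := by
        rw [← CStarRing.norm_star_mul_self, hsY, hY2, norm_zero]
      exact norm_eq_zero.mp (mul_self_eq_zero.mp hnrm)
    have hdn : ‖d‖ * ‖d‖ = 0 := by
      rw [← CStarRing.norm_self_mul_star, hY, norm_zero]
    have hd0 : d = 0 := norm_eq_zero.mp (mul_self_eq_zero.mp hdn)
    exact sub_eq_zero.mp hd0
  -- positivity
  have hpos : ∀ ξ : X, 0 ≤ L ξ ξ := by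
    intro ξ
    set a := L ξ ξ with haL
    have hsa : IsSelfAdjoint a := (hstar ξ ξ).symm
    set n := a⁻ with hn
    have hn0 : 0 ≤ n := CFC.negPart_nonneg a
    have hns : star n = n := (IsSelfAdjoint.of_nonneg hn0)
    have hsq : CFC.sqrt n * CFC.sqrt n = n := CFC.sqrt_mul_sqrt_self n hn0
    have hcomm : CFC.sqrt n * n = n * CFC.sqrt n := by
      calc CFC.sqrt n * n = CFC.sqrt n * (CFC.sqrt n * CFC.sqrt n) := by rw [hsq]
        _ = (CFC.sqrt n * CFC.sqrt n) * CFC.sqrt n := by rw [mul_assoc]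
        _ = n * CFC.sqrt n := by rw [hsq]
    set m := n * CFC.sqrt n with hm
    have hms : star m = m := by
      rw [hm, star_mul, hns, IsSelfAdjoint.of_nonneg (CFC.sqrt_nonneg (a := n)), hcomm]
    have hmm : m * m = n * n * n := by
      calc m * m = n * (CFC.sqrt n * n) * CFC.sqrt n := by rw [hm]; noncomm_ring
        _ = n * (n * CFC.sqrt n) * CFC.sqrt n := by rw [hcomm]
        _ = n * n * (CFC.sqrt n * CFC.sqrt n) := by noncomm_ring
        _ = n * n * n := by rw [hsq]
    -- n * a * n = -(m * m)
    have hna : n * a * n = -(m * m) := by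
      have ha' : a⁺ - n = a := CFC.posPart_sub_negPart a hsa
      calc n * a * n = n * (a⁺ - n) * n := by rw [ha']
        _ = (n * a⁺) * n - n * n * n := by noncomm_ring
        _ = -(m * m) := by rw [CFC.negPart_mul_posPart, zero_mul, zero_sub, hmm]
    -- φ m annihilates every vector
    have hkey : ∀ ζ : X, φ m ζ = 0 := by
      intro ζ
      have hA : (inner A ζ (φ (m * m) ζ) : A) = inner A (φ m ζ) (φ m ζ) := by
        have h' := hadj m ζ (φ m ζ)
        rw [hms] at h'
        rw [map_mul, ContinuousLinearMap.mul_apply, ← h']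
      have hna' : n * (a * n) = -(m * m) := by rw [← mul_assoc]; exact hna
      have hmm' : m * m = -(n * (a * n)) := by rw [hna', neg_neg]
      have hB : (inner A ζ (φ (m * m) ζ) : A) =
          -(star (inner A ξ (φ n ζ) : A) * (inner A ξ (φ n ζ) : A)) := by
        rw [hmm', map_neg, map_mul, map_mul, ContinuousLinearMap.neg_apply,
          ContinuousLinearMap.mul_apply, ContinuousLinearMap.mul_apply,
          CStarModuleOld.inner_neg_right]
        congr 1
        have hstep : (inner A ζ (φ n (φ a (φ n ζ))) : A)
            = inner A (φ n ζ) (φ a (φ n ζ)) := by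
          have h'' := hadj n ζ (φ a (φ n ζ))
          rw [hns] at h''
          exact h''.symm
        rw [hstep, hL2 ξ ξ (φ n ζ), CStarModuleOld.inner_op_smul_right,
          CStarModuleOld.star_inner]
      have hApos : 0 ≤ (inner A (φ m ζ) (φ m ζ) : A) := CStarModuleOld.inner_self_nonneg
      have hAneg : (inner A (φ m ζ) (φ m ζ) : A) ≤ 0 := by
        rw [← hA, hB]
        exact neg_nonpos.mpr (star_mul_self_nonneg _)
      exact CStarModuleOld.inner_self.mp (le_antisymm hAneg hApos)
    have hφm : φ m = 0 := by ext ζ; rw [hkey ζ, ContinuousLinearMap.zero_apply]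
    have ham : a * m = 0 := hLperp ξ ξ m hφm
    have hnm : n * m = 0 := by
      have ha' : a⁺ - n = a := CFC.posPart_sub_negPart a hsa
      have h' : a * m = (a⁺ * n) * CFC.sqrt n - n * m := by
        nth_rewrite 1 [← ha']
        rw [hm]; noncomm_ring
      rw [ham, CFC.posPart_mul_negPart, zero_mul, zero_sub] at h'
      exact (neg_eq_zero.mp h'.symm)
    have h6 : n * n * n = 0 := by
      have : (n * m) * CFC.sqrt n = 0 := by rw [hnm, zero_mul]
      calc n * n * n = n * n * (CFC.sqrt n * CFC.sqrt n) := by rw [hsq]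
        _ = (n * m) * CFC.sqrt n := by rw [hm]; noncomm_ring
        _ = 0 := this
    have h7 : (n * n) * (n * n) = 0 := by
      calc (n * n) * (n * n) = (n * n * n) * n := by noncomm_ring
        _ = 0 := by rw [h6, zero_mul]
    have h8 : n * n = 0 := by
      have hsnn : star (n * n) = n * n := by rw [star_mul, hns]
      have : ‖n * n‖ * ‖n * n‖ = 0 := by
        rw [← CStarRing.norm_star_mul_self, hsnn, h7, norm_zero]
      exact norm_eq_zero.mp (mul_self_eq_zero.mp this)
    have h9 : n = 0 := by
      have : ‖n‖ * ‖n‖ = 0 := by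
        rw [← CStarRing.norm_star_mul_self, hns, h8, norm_zero]
      exact norm_eq_zero.mp (mul_self_eq_zero.mp this)
    have ha' : a⁺ - n = a := CFC.posPart_sub_negPart a hsa
    rw [h9, sub_zero] at ha'
    calc (0 : A) ≤ a⁺ := CFC.posPart_nonneg a
      _ = a := ha'

  exact ⟨L, hLmem, hL2, hadd, hsmul, hmul, hstar, hpos⟩
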